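/- Let φ : E → Ẽ be an extension equivalence between crossed module extensions of G with M, and let s̃¹ : im μ_{Ẽ} → T_{Ẽ} be a pointed section of (μ_{Ẽ} corestricted to its image). Then there exists exactly one pointed section s¹ : im μ_E → T_E of (μ_E corestricted to its image) such that φ₁ ∘ s¹ = s̃¹ ∘ (φ₀ restricted to im μ_E → im μ_{Ẽ}). -/
import Mathlib


/-- Let `φ : E → Ẽ` be an extension equivalence between crossed module extensions of `G`
with `M`, and let `s̃¹ : im μ_Ẽ → T_Ẽ` be a pointed section of `μ_Ẽ` corestricted to its
image. Then there is exactly one pointed section `s¹ : im μ_E → T_E` of `μ_E`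
corestricted to its image such that `φ₁ ∘ s¹ = s̃¹ ∘ (φ₀ restricted to im μ_E → im μ_Ẽ)`. -/
theorem unique_compatible_section
    {G M T Γ : Type*} [Group G] [AddCommGroup M] [DistribMulAction G M]
    [Group T] [Group Γ]
    -- the crossed module extension E : M → T → Γ → G with action `act` of Γ on T
    (act : Γ → T → T)
    (hact1 : ∀ g t s, act g (t * s) = act g t * act g s)
    (hact2 : ∀ t, act 1 t = t)
    (hact3 : ∀ g h t, act (g * h) t = act g (act h t))
    (ι : M → T) (μ : T →* Γ) (π : Γ →* G)
    (hι : Function.Injective ι)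
    (hιadd : ∀ a b, ι (a + b) = ι a * ι b)
    (hequi : ∀ g t, μ (act g t) = g * μ t * g⁻¹)
    (hpeif : ∀ t s, act (μ s) t = s * t * s⁻¹)
    (hexact₁ : ∀ t : T, μ t = 1 ↔ ∃ m, ι m = t)
    (hexact₂ : ∀ g : Γ, π g = 1 ↔ ∃ t, μ t = g)
    (hπ : Function.Surjective π)
    (hcompat : ∀ (e : Γ) (m : M), act e (ι m) = ι (π e • m))
    {T' Γ' : Type*} [Group T'] [Group Γ']
    -- the crossed module extension E : M → T' → Γ' → G with act'ion `act'` of Γ' on T'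
    (act' : Γ' → T' → T')
    (hact'1 : ∀ g t s, act' g (t * s) = act' g t * act' g s)
    (hact'2 : ∀ t, act' 1 t = t)
    (hact'3 : ∀ g h t, act' (g * h) t = act' g (act' h t))
    (ι' : M → T') (μ' : T' →* Γ') (π' : Γ' →* G)
    (hι'' : Function.Injective ι')
    (hι''add : ∀ a b, ι' (a + b) = ι' a * ι' b)
    (hequi' : ∀ g t, μ' (act' g t) = g * μ' t * g⁻¹)
    (hpeif' : ∀ t s, act' (μ' s) t = s * t * s⁻¹)
    (hexact''₁ : ∀ t : T', μ' t = 1 ↔ ∃ m, ι' m = t)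
    (hexact''₂ : ∀ g : Γ', π' g = 1 ↔ ∃ t, μ' t = g)
    (hπ' : Function.Surjective π')
    (hcompat' : ∀ (e : Γ') (m : M), act' e (ι' m) = ι' (π' e • m))
    -- an extension equivalence φ = (φ₁, φ₀) : E → Ẽ
    (φ₀ : Γ →* Γ') (φ₁ : T →* T')
    (hφι : ∀ m, φ₁ (ι m) = ι' m)
    (hφμ : ∀ t, μ' (φ₁ t) = φ₀ (μ t))
    (hφπ : ∀ g, π' (φ₀ g) = π g)
    (hφact : ∀ g t, φ₁ (act g t) = act' (φ₀ g) (φ₁ t))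
    (s1' : μ'.range → T')
    (hs1' : ∀ x : μ'.range, μ' (s1' x) = x)
    (hs1'pt : s1' 1 = 1) :
    ∃! s1 : μ.range → T,
      (∀ x : μ.range, μ (s1 x) = x) ∧ s1 1 = 1 ∧
      ∀ x : μ.range,
        φ₁ (s1 x) =
          s1' ⟨φ₀ x, by
            obtain ⟨t, ht⟩ := MonoidHom.mem_range.mp x.2
            exact MonoidHom.mem_range.mpr ⟨φ₁ t, by rw [hφμ t, ht]⟩⟩ := by

  classical
  -- basic facts about ι and ι'
  have hι0 : ι 0 = 1 := by
    have h := hιadd 0 0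
    rw [add_zero] at h
    have : ι 0 * ι 0 = ι 0 * 1 := by rw [mul_one, ← h]
    exact mul_left_cancel this
  have hι'0 : ι' 0 = 1 := by
    have h := hι''add 0 0
    rw [add_zero] at h
    have : ι' 0 * ι' 0 = ι' 0 * 1 := by rw [mul_one, ← h]
    exact mul_left_cancel this
  -- choose preimages
  have hT : ∀ x : μ.range, ∃ tt : T, μ tt = x := fun x => MonoidHom.mem_range.mp x.2
  choose t ht using hT
  have hmem : ∀ x : μ.range, (φ₀ x : Γ') ∈ μ'.range := fun x =>
    MonoidHom.mem_range.mpr ⟨φ₁ (t x), by rw [hφμ, ht]⟩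
  have hM : ∀ x : μ.range, ∃ m : M, ι' m = (φ₁ (t x))⁻¹ * s1' ⟨φ₀ x, hmem x⟩ := by
    intro x
    apply (hexact''₁ _).mp
    rw [map_mul, map_inv, hφμ, ht, hs1' ⟨_, hmem x⟩]
    simp
  choose m hm using hM
  set s : μ.range → T := fun x => t x * ι (m x) with hs
  have hsec : ∀ x : μ.range, μ (s x) = x := by
    intro x
    have : μ (ι (m x)) = 1 := (hexact₁ _).mpr ⟨m x, rfl⟩
    rw [hs]; simp only [map_mul, this, mul_one, ht]
  have hcomp : ∀ x : μ.range, φ₁ (s x) = s1' ⟨φ₀ x, hmem x⟩ := by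
    intro x
    rw [hs]
    simp only [map_mul, hφι, hm]
    group
  have hpt : s 1 = 1 := by
    have h1 : μ (t 1) = 1 := by rw [ht]; rfl
    obtain ⟨m₀, hm₀⟩ := (hexact₁ _).mp h1
    have hone : (⟨φ₀ ((1 : μ.range) : Γ), hmem 1⟩ : μ'.range) = 1 :=
      Subtype.ext (by simp)
    have h2 : φ₁ (s 1) = 1 := by rw [hcomp 1, hone, hs1'pt]
    have h3 : ι' (m₀ + m 1) = 1 := by
      rw [hι''add, ← hφι, ← hφι, hm₀, ← map_mul]
      exact h2
    have h4 : m₀ + m 1 = 0 := hι'' (by rw [h3, hι'0])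
    rw [hs]
    simp only [← hm₀, ← hιadd, h4, hι0]
  refine ⟨s, ⟨hsec, hpt, ?_⟩, ?_⟩
  · intro x
    rw [hcomp x]
  · rintro s₂ ⟨hsec₂, hpt₂, hcomp₂⟩
    funext x
    have h1 : μ ((s x)⁻¹ * s₂ x) = 1 := by
      rw [map_mul, map_inv, hsec, hsec₂]; group
    obtain ⟨n, hn⟩ := (hexact₁ _).mp h1
    have h2 : φ₁ (s₂ x) = φ₁ (s x) := by
      rw [hcomp x, hcomp₂ x]
    have h3 : ι' n = 1 := by
      rw [← hφι, hn, map_mul, map_inv, h2]; group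
    have h4 : n = 0 := hι'' (by rw [h3, hι'0])
    have h5 : (s x)⁻¹ * s₂ x = 1 := by rw [← hn, h4, hι0]
    exact (inv_injective (mul_eq_one_iff_eq_inv.mp h5)).symm
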